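/- Let H be a submonoid of ℕ^k with H ≠ {0}, and let X ⊆ {1,…,k} be maximal independent over H. Then free H = |X|; that is, there exists a submonoid F of ℕ^k with F ⊆ H such that F is isomorphic as an additive monoid to ℕ^{|X|}, and every submonoid F ⊆ H isomorphic to some ℕ^n (n ≥ 1) satisfies n ≤ |X|. -/

import Mathlib

def coordFn {k : ℕ} (A : Set (Fin k → ℕ)) (i : Fin k) : A → ℚ :=
  fun f => ((f : Fin k → ℕ) i : ℚ)

def IndepOver {k : ℕ} (X : Finset (Fin k)) (A : Set (Fin k → ℕ)) : Prop :=
  LinearIndependent ℚ (fun i : X => coordFn A i.1)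

def MaxIndepOver {k : ℕ} (X : Finset (Fin k)) (A : Set (Fin k → ℕ)) : Prop :=
  IndepOver X A ∧ ∀ Y : Finset (Fin k), X ⊂ Y → ¬ IndepOver Y A

open Pointwise in
def beta {k : ℕ} (H : AddSubmonoid (Fin k → ℕ)) : Set (Fin k → ℕ) :=
  ((H : Set (Fin k → ℕ)) \ {0}) \
    (((H : Set (Fin k → ℕ)) \ {0}) + ((H : Set (Fin k → ℕ)) \ {0}))

def restrictHom {k : ℕ} (X : Finset (Fin k)) : (Fin k → ℕ) →+ (Fin X.card → ℕ) where
  toFun h := fun j => h (X.orderIsoOfFin rfl j).1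
  map_zero' := rfl
  map_add' _ _ := rfl

def IsoToSub {k : ℕ} (H : AddSubmonoid (Fin k → ℕ)) (r : ℕ) : Prop :=
  ∃ K : AddSubmonoid (Fin r → ℕ), Nonempty (H ≃+ K)

noncomputable def indOf {k : ℕ} (H : AddSubmonoid (Fin k → ℕ)) : ℕ :=
  sInf {r : ℕ | 1 ≤ r ∧ IsoToSub H r}




def iotaHom (k : ℕ) : (Fin k → ℕ) →+ (Fin k → ℚ) where
  toFun f := fun i => (f i : ℚ)
  map_zero' := by funext i; simp
  map_add' f g := by funext i; simp

lemma iota_inj {k : ℕ} : Function.Injective (iotaHom k) := by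
  intro a b h
  funext i
  have h2 : ((a i : ℕ) : ℚ) = ((b i : ℕ) : ℚ) := congrFun h i
  exact_mod_cast h2

lemma key_c {k : ℕ} (H : AddSubmonoid (Fin k → ℕ)) (X : Finset (Fin k))
    (hmax : MaxIndepOver X (H : Set (Fin k → ℕ))) (i : Fin k) :
    ∃ c : Fin k → ℚ, ∀ h ∈ H, (h i : ℚ) = ∑ j ∈ X, c j * (h j : ℚ) := by
  classical
  set A : Set (Fin k → ℕ) := (H : Set (Fin k → ℕ))
  by_cases hi : i ∈ X
  · refine ⟨fun j => if j = i then 1 else 0, fun h hh => ?_⟩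
    rw [Finset.sum_eq_single i]
    · simp
    · intro b hb hbi; simp [hbi]
    · intro h'; exact absurd hi h'
  · have hins := hmax.2 (insert i X) (Finset.ssubset_insert hi)
    rw [IndepOver, Fintype.not_linearIndependent_iff] at hins
    obtain ⟨g, hsum, y0, hy0⟩ := hins
    set i0 : ↥(insert i X) := ⟨i, Finset.mem_insert_self i X⟩ with hi0
    -- rewrite the sum
    have hsplit : ∀ (g : ↥(insert i X) → ℚ),
        (∑ y : ↥(insert i X), g y • coordFn A y.1)
          = g i0 • coordFn A i + ∑ x : ↥X, g ⟨x.1, Finset.mem_insert_of_mem x.2⟩ • coordFn A x.1 := by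
      intro g
      have e1 : (∑ y : ↥(insert i X), g y • coordFn A y.1)
          = ∑ a ∈ insert i X, (if ha : a ∈ insert i X then g ⟨a, ha⟩ • coordFn A a else 0) := by
        rw [Finset.univ_eq_attach, ← Finset.sum_attach (insert i X)
          (fun a => if ha : a ∈ insert i X then g ⟨a, ha⟩ • coordFn A a else 0)]
        refine Finset.sum_congr rfl fun y _ => ?_
        rw [dif_pos y.2]
      have e2 : (∑ x : ↥X, g ⟨x.1, Finset.mem_insert_of_mem x.2⟩ • coordFn A x.1)
          = ∑ a ∈ X, (if ha : a ∈ insert i X then g ⟨a, ha⟩ • coordFn A a else 0) := by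
        rw [Finset.univ_eq_attach, ← Finset.sum_attach X
          (fun a => if ha : a ∈ insert i X then g ⟨a, ha⟩ • coordFn A a else 0)]
        refine Finset.sum_congr rfl fun x _ => ?_
        rw [dif_pos (Finset.mem_insert_of_mem x.2)]
      rw [e1, e2, Finset.sum_insert hi, dif_pos (Finset.mem_insert_self i X)]
    by_cases hgi : g i0 = 0
    · exfalso
      rw [hsplit, hgi, zero_smul, zero_add] at hsum
      have hind := hmax.1
      rw [IndepOver, Fintype.linearIndependent_iff] at hind
      have hz := hind (fun x => g ⟨x.1, Finset.mem_insert_of_mem x.2⟩) hsum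
      -- show every coefficient of g is zero
      rcases Finset.mem_insert.1 y0.2 with h1 | h2
      · apply hy0
        have : y0 = i0 := Subtype.ext h1
        rw [this, hgi]
      · exact hy0 (hz ⟨y0.1, h2⟩)
    · refine ⟨fun j => if hj : j ∈ X then -(g ⟨j, Finset.mem_insert_of_mem hj⟩) / g i0 else 0,
        fun h hh => ?_⟩
      rw [hsplit] at hsum
      have := congrFun hsum ⟨h, hh⟩
      simp only [Pi.add_apply, Pi.smul_apply, Finset.sum_apply, Pi.zero_apply,
        smul_eq_mul, coordFn] at this
      have hsX : ∀ (F : ↥X → ℚ), (∑ x : ↥X, F x)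
          = ∑ a ∈ X, (if ha : a ∈ X then F ⟨a, ha⟩ else 0) := by
        intro F
        rw [Finset.univ_eq_attach, ← Finset.sum_attach X
          (fun a => if ha : a ∈ X then F ⟨a, ha⟩ else 0)]
        refine Finset.sum_congr rfl fun x _ => ?_
        rw [dif_pos x.2]
      have heq : (h i : ℚ) = ∑ x : ↥X, -(g ⟨x.1, Finset.mem_insert_of_mem x.2⟩) / g i0 * (h x.1 : ℚ) := by
        have e : (∑ x : ↥X, -(g ⟨x.1, Finset.mem_insert_of_mem x.2⟩) / g i0 * (h x.1 : ℚ))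
            = (g i0)⁻¹ * ∑ x : ↥X, -(g ⟨x.1, Finset.mem_insert_of_mem x.2⟩ * (h x.1 : ℚ)) := by
          rw [Finset.mul_sum]
          exact Finset.sum_congr rfl fun x _ => by ring
        have e2 : (∑ x : ↥X, -(g ⟨x.1, Finset.mem_insert_of_mem x.2⟩ * (h x.1 : ℚ)))
            = g i0 * (h i : ℚ) := by
          have e3 : (∑ x : ↥X, -(g ⟨x.1, Finset.mem_insert_of_mem x.2⟩ * (h x.1 : ℚ)))
              = -(∑ x : ↥X, g ⟨x.1, Finset.mem_insert_of_mem x.2⟩ * (h x.1 : ℚ)) := by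
            rw [← Finset.sum_neg_distrib]
          rw [e3]
          linarith [this]
        rw [e, e2, inv_mul_cancel_left₀ hgi]
      rw [heq, hsX (fun x => -(g ⟨x.1, Finset.mem_insert_of_mem x.2⟩) / g i0 * (h x.1 : ℚ))]
      refine Finset.sum_congr rfl fun a ha => ?_
      simp [ha]

lemma span_coord_zero {k : ℕ} (H : AddSubmonoid (Fin k → ℕ)) (X : Finset (Fin k))
    (hmax : MaxIndepOver X (H : Set (Fin k → ℕ))) :
    ∀ w ∈ Submodule.span ℚ ((iotaHom k) '' (H : Set (Fin k → ℕ))),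
      (∀ j ∈ X, w j = 0) → w = 0 := by
  classical
  choose c hc using key_c H X hmax
  have main : ∀ w ∈ Submodule.span ℚ ((iotaHom k) '' (H : Set (Fin k → ℕ))),
      ∀ i, w i = ∑ j ∈ X, c i j * w j := by
    intro w hw
    induction hw using Submodule.span_induction with
    | mem x hx =>
        obtain ⟨h, hh, rfl⟩ := hx
        intro i
        simpa [iotaHom] using hc i h hh
    | zero => intro i; simp
    | add x y hx hy ihx ihy =>
        intro i
        simp only [Pi.add_apply, ihx i, ihy i, ← Finset.sum_add_distrib]
        exact Finset.sum_congr rfl fun j _ => by ring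
    | smul a x hx ihx =>
        intro i
        simp only [Pi.smul_apply, smul_eq_mul, ihx i, Finset.mul_sum]
        exact Finset.sum_congr rfl fun j _ => by ring
  intro w hw hz
  funext i
  rw [Pi.zero_apply, main w hw i]
  exact Finset.sum_eq_zero fun j hj => by rw [hz j hj, mul_zero]

lemma exists_indep_family {k : ℕ} (H : AddSubmonoid (Fin k → ℕ)) (X : Finset (Fin k))
    (hindep : IndepOver X (H : Set (Fin k → ℕ))) :
    ∃ h : Fin X.card → (Fin k → ℕ), (∀ j, h j ∈ H) ∧
      LinearIndependent ℚ (fun j => (iotaHom k) (h j)) := by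
  classical
  set π : (Fin k → ℚ) →ₗ[ℚ] (↥X → ℚ) := LinearMap.funLeft ℚ ℚ (fun j : ↥X => (j : Fin k)) with hπ
  set S : Set (↥X → ℚ) := (fun h : Fin k → ℕ => fun j : ↥X => (h j.1 : ℚ)) '' (H : Set _) with hS
  have hspan : Submodule.span ℚ S = ⊤ := by
    by_contra hne
    obtain ⟨f, hf0, hfmap⟩ := Submodule.exists_dual_map_eq_bot_of_lt_top
      (p := Submodule.span ℚ S) (lt_top_iff_ne_top.2 hne) inferInstance
    set q : ↥X → ℚ := fun j => f (Pi.single j 1) with hq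
    have hfv : ∀ v : ↥X → ℚ, f v = ∑ j : ↥X, v j * q j := by
      intro v
      conv_lhs => rw [← Finset.univ_sum_single v]
      rw [map_sum]
      refine Finset.sum_congr rfl fun j _ => ?_
      have hsing : Pi.single j (v j) = v j • (Pi.single j 1 : ↥X → ℚ) := by
        funext t; by_cases ht : t = j <;> simp [Pi.single_apply, ht]
      rw [hsing, map_smul, smul_eq_mul]
    have hzero : (∑ j : ↥X, q j • coordFn (H : Set (Fin k → ℕ)) j.1) = 0 := by
      funext a
      simp only [Finset.sum_apply, Pi.smul_apply, smul_eq_mul, Pi.zero_apply, coordFn]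
      have hmem : (fun j : ↥X => ((a : Fin k → ℕ) j.1 : ℚ)) ∈ S := ⟨a.1, a.2, rfl⟩
      have hfz : f (fun j : ↥X => ((a : Fin k → ℕ) j.1 : ℚ)) = 0 := by
        have := Submodule.mem_map_of_mem (f := f) (Submodule.subset_span hmem)
        rw [hfmap] at this
        exact this
      rw [hfv] at hfz
      rw [← hfz]
      exact Finset.sum_congr rfl fun j _ => mul_comm _ _
    rw [IndepOver, Fintype.linearIndependent_iff] at hindep
    have hqz := hindep q hzero
    apply hf0
    refine LinearMap.ext fun v => ?_
    rw [hfv]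
    simp [hqz]
  obtain ⟨b, hbS, hbspan, hbind⟩ := exists_linearIndependent ℚ S
  rw [hspan] at hbspan
  have hfin : b.Finite := hbind.setFinite
  have : Fintype ↥b := hfin.fintype
  have hbasis : Module.Basis ↥b ℚ (↥X → ℚ) := Module.Basis.mk hbind (by rw [Subtype.range_coe, hbspan])
  have hcard : Fintype.card ↥b = X.card := by
    have h1 := Module.finrank_eq_card_basis hbasis
    rw [Module.finrank_pi] at h1
    rw [← h1, Fintype.card_coe]
  have e : Fin X.card ≃ ↥b := (Fintype.equivFinOfCardEq hcard).symm
  have hpick : ∀ y : ↥b, ∃ h : Fin k → ℕ, h ∈ H ∧ (fun j : ↥X => (h j.1 : ℚ)) = y.1 :=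
    fun y => hbS y.2
  choose pick hpickH hpickv using hpick
  refine ⟨fun j => pick (e j), fun j => hpickH (e j), ?_⟩
  have hcomp : LinearIndependent ℚ (fun j : Fin X.card => (e j).1) :=
    hbind.comp e e.injective
  refine LinearIndependent.of_comp π ?_
  have : (⇑π ∘ fun j => (iotaHom k) (pick (e j))) = fun j : Fin X.card => (e j).1 := by
    funext j
    rw [← hpickv (e j)]
    rfl
  rw [this]
  exact hcomp

lemma single_eq_smul {n : ℕ} (c : Fin n → ℕ) (j : Fin n) :
    Pi.single j (c j) = c j • (Pi.single j 1 : Fin n → ℕ) := by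
  funext t; by_cases ht : t = j <;> simp [Pi.single_apply, ht]

lemma hom_sum {k n : ℕ} (ψ : (Fin n → ℕ) →+ (Fin k → ℕ)) (c : Fin n → ℕ) :
    ψ c = ∑ j, c j • ψ (Pi.single j 1) := by
  conv_lhs => rw [← Finset.univ_sum_single c]
  rw [map_sum]
  exact Finset.sum_congr rfl fun j _ => by rw [single_eq_smul c j, AddMonoidHom.map_nsmul]

lemma hom_indep {k n : ℕ} (ψ : (Fin n → ℕ) →+ (Fin k → ℕ)) (hinj : Function.Injective ψ) :
    LinearIndependent ℚ (fun j : Fin n => (iotaHom k) (ψ (Pi.single j 1))) := by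
  rw [← LinearIndependent.iff_fractionRing ℤ ℚ, Fintype.linearIndependent_iff]
  intro q hq
  set v : Fin n → (Fin k → ℚ) := fun j => (iotaHom k) (ψ (Pi.single j 1)) with hv
  set a : Fin n → ℕ := fun j => (q j).toNat with ha
  set b : Fin n → ℕ := fun j => (-q j).toNat with hb
  have hab : ∀ j, (a j : ℤ) - b j = q j := fun j => Int.toNat_sub_toNat_neg (q j)
  have hsum : (∑ j, (a j : ℤ) • v j) = ∑ j, (b j : ℤ) • v j := by
    have h1 : (∑ j, ((a j : ℤ) • v j - (b j : ℤ) • v j)) = 0 := by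
      rw [← hq]
      exact Finset.sum_congr rfl fun j _ => by rw [← sub_smul, hab j]
    rw [Finset.sum_sub_distrib, sub_eq_zero] at h1
    exact h1
  have hsum' : ψ a = ψ b := by
    apply iota_inj
    rw [hom_sum ψ a, hom_sum ψ b, map_sum, map_sum]
    simp only [AddMonoidHom.map_nsmul]
    have conv : ∀ (m : ℕ) (w : Fin k → ℚ), (m : ℤ) • w = m • w := fun m w => natCast_zsmul w m
    calc (∑ j, a j • v j) = ∑ j, (a j : ℤ) • v j := by
          exact Finset.sum_congr rfl fun j _ => (conv _ _).symm
      _ = ∑ j, (b j : ℤ) • v j := hsum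
      _ = ∑ j, b j • v j := Finset.sum_congr rfl fun j _ => conv _ _
  have habn : a = b := hinj hsum'
  intro j
  rw [← hab j, congrFun habn j, sub_self]

noncomputable def phiHom {k n : ℕ} (h : Fin n → (Fin k → ℕ)) : (Fin n → ℕ) →+ (Fin k → ℕ) where
  toFun c := ∑ j, c j • h j
  map_zero' := by simp
  map_add' a b := by
    simp only [Pi.add_apply, add_smul]
    rw [Finset.sum_add_distrib]

lemma iota_phi {k n : ℕ} (h : Fin n → (Fin k → ℕ)) (c : Fin n → ℕ) :
    (iotaHom k) (phiHom h c) = ∑ j, (c j : ℚ) • (iotaHom k) (h j) := by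
  show (iotaHom k) (∑ j, c j • h j) = _
  rw [map_sum]
  exact Finset.sum_congr rfl fun j _ => by
    rw [AddMonoidHom.map_nsmul, Nat.cast_smul_eq_nsmul]


theorem statement8 {k : ℕ} (hk : 0 < k) (H : AddSubmonoid (Fin k → ℕ)) (hH : H ≠ ⊥)
    (X : Finset (Fin k)) (hX : X.Nonempty)
    (hmax : MaxIndepOver X (H : Set (Fin k → ℕ))) :
    (∃ F : AddSubmonoid (Fin k → ℕ), F ≤ H ∧
        Nonempty (F ≃+ (Fin X.card → ℕ))) ∧
      ∀ n : ℕ, 1 ≤ n → ∀ F : AddSubmonoid (Fin k → ℕ), F ≤ H →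
        Nonempty (F ≃+ (Fin n → ℕ)) → n ≤ X.card := by
  classical
  constructor
  · -- existence
    obtain ⟨h, hhH, hind⟩ := exists_indep_family H X hmax.1
    set φ := phiHom h with hφ
    have hinj : Function.Injective φ := by
      intro a b hab
      have h1 : (∑ j, ((a j : ℚ) - (b j : ℚ)) • (iotaHom k) (h j)) = 0 := by
        have h2 := congrArg (iotaHom k) hab
        rw [iota_phi, iota_phi] at h2
        simp only [sub_smul, Finset.sum_sub_distrib, h2, sub_self]
      rw [Fintype.linearIndependent_iff] at hind
      have h3 := hind _ h1
      funext j
      have h4 := h3 j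
      rw [sub_eq_zero] at h4
      exact_mod_cast h4
    refine ⟨AddMonoidHom.mrange φ, ?_, ?_⟩
    · rintro x ⟨c, rfl⟩
      show (∑ j, c j • h j) ∈ H
      exact AddSubmonoid.sum_mem H fun j _ => AddSubmonoid.nsmul_mem H (hhH j) _
    · have hbij : Function.Bijective φ.mrangeRestrict :=
        ⟨fun x y hxy => hinj (Subtype.ext_iff.1 hxy), φ.mrangeRestrict_surjective⟩
      exact ⟨(AddEquiv.ofBijective φ.mrangeRestrict hbij).symm⟩
  · -- upper bound
    rintro n hn F hFH ⟨e⟩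
    set ψ : (Fin n → ℕ) →+ (Fin k → ℕ) := (AddSubmonoid.subtype F).comp e.symm.toAddMonoidHom with hψ
    have hinj : Function.Injective ψ :=
      Subtype.coe_injective.comp e.symm.injective
    set g : Fin n → (Fin k → ℕ) := fun j => ψ (Pi.single j 1) with hg
    have hgH : ∀ j, g j ∈ H := fun j => hFH (e.symm (Pi.single j 1)).2
    have hgind := hom_indep ψ hinj
    set π : (Fin k → ℚ) →ₗ[ℚ] (↥X → ℚ) := LinearMap.funLeft ℚ ℚ (fun j : ↥X => (j : Fin k)) with hπ
    have hπind : LinearIndependent ℚ (fun j : Fin n => π ((iotaHom k) (g j))) := by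
      rw [Fintype.linearIndependent_iff]
      intro q hq
      have hw : (∑ j, q j • (iotaHom k) (g j)) ∈
          Submodule.span ℚ ((iotaHom k) '' (H : Set (Fin k → ℕ))) :=
        Submodule.sum_mem _ fun j _ =>
          Submodule.smul_mem _ _ (Submodule.subset_span ⟨g j, hgH j, rfl⟩)
      have hz : ∀ t ∈ X, (∑ j, q j • (iotaHom k) (g j)) t = 0 := by
        intro t ht
        have h5 := congrFun hq ⟨t, ht⟩
        simp only [Finset.sum_apply, Pi.smul_apply, smul_eq_mul, Pi.zero_apply] at h5 ⊢
        exact h5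
      have h6 := span_coord_zero H X hmax _ hw hz
      rw [Fintype.linearIndependent_iff] at hgind
      exact hgind q h6
    have h7 := hπind.fintype_card_le_finrank
    rw [Module.finrank_pi, Fintype.card_coe, Fintype.card_fin] at h7
    exact h7
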